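/- Let G be the group with a semidirect product structure G = G' ⋊ Z, where G' = (F_2 × Z/2) ⋊ V as above (generators x, y, w, a, b) and Z = ⟨g⟩ acts by g x g^{-1} = y^{-1}, g y g^{-1} = y·x·b, g w g^{-1} = w, g a g^{-1} = b, g b g^{-1} = a·b. Then the assignment g ↦ g, x ↦ y^{-1}·a, y ↦ y·x·w, a ↦ b, b ↦ a·b, w ↦ w extends to a group automorphism φ of G. -/

import Mathlib

namespace EyralOkaG

open FreeGroup

/-- Generators of `G = ((F₂ × ℤ/2) ⋊ V) ⋊ ℤ`: `g = 0`, `x = 1`, `y = 2`, `w = 3`,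
`a = 4`, `b = 5`. -/
def Gg : FreeGroup (Fin 6) := of 0
def X : FreeGroup (Fin 6) := of 1
def Y : FreeGroup (Fin 6) := of 2
def W : FreeGroup (Fin 6) := of 3
def A : FreeGroup (Fin 6) := of 4
def B : FreeGroup (Fin 6) := of 5

/-- Defining relations of `G = G' ⋊ ℤ`, where `G' = (F₂ × ℤ/2) ⋊ V` is generated by
`x, y, w, a, b` as before and the generator `g` of `ℤ` acts by `g x g⁻¹ = y⁻¹`,
`g y g⁻¹ = y·x·b`, `g w g⁻¹ = w`, `g a g⁻¹ = b`, `g b g⁻¹ = a·b`. -/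
def GRels : Set (FreeGroup (Fin 6)) :=
  { W * W, X * W * X⁻¹ * W⁻¹, Y * W * Y⁻¹ * W⁻¹,
    A * A, B * B, A * B * A⁻¹ * B⁻¹,
    A * X * A⁻¹ * X⁻¹, A * Y * A⁻¹ * (Y * W)⁻¹, A * W * A⁻¹ * W⁻¹,
    B * X * B⁻¹ * (X * W)⁻¹, B * Y * B⁻¹ * Y⁻¹, B * W * B⁻¹ * W⁻¹,
    Gg * X * Gg⁻¹ * (Y⁻¹)⁻¹, Gg * Y * Gg⁻¹ * (Y * X * B)⁻¹, Gg * W * Gg⁻¹ * W⁻¹,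
    Gg * A * Gg⁻¹ * B⁻¹, Gg * B * Gg⁻¹ * (A * B)⁻¹ }

/-- The fundamental group `G` of the affine Eyral-Oka curve complement, via its explicit
semidirect product presentation. -/
def G : Type := PresentedGroup GRels

instance : Group G := by unfold G; infer_instance

def g : G := PresentedGroup.of 0
def x : G := PresentedGroup.of 1
def y : G := PresentedGroup.of 2
def w : G := PresentedGroup.of 3
def a : G := PresentedGroup.of 4
def b : G := PresentedGroup.of 5

lemma rel_of_mem {r : FreeGroup (Fin 6)} (hr : r ∈ GRels) :
    PresentedGroup.mk GRels r = (1 : G) :=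
  (QuotientGroup.eq_one_iff _).2 (Subgroup.subset_normalClosure hr)

lemma mk_mul (u v : FreeGroup (Fin 6)) :
    (PresentedGroup.mk GRels (u * v) : G) = (PresentedGroup.mk GRels u : G) * PresentedGroup.mk GRels v :=
  map_mul _ u v
lemma mk_inv (u : FreeGroup (Fin 6)) :
    (PresentedGroup.mk GRels u⁻¹ : G) = (PresentedGroup.mk GRels u : G)⁻¹ :=
  map_inv _ u
@[simp] lemma hom_mul (f : PresentedGroup GRels →* G) (p q : G) : f (p * q : G) = f p * f q :=
  map_mul f p q
@[simp] lemma hom_inv (f : PresentedGroup GRels →* G) (p : G) : f (p⁻¹ : G) = (f p)⁻¹ :=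
  map_inv f p

lemma mkG : PresentedGroup.mk GRels Gg = g := rfl
lemma mkX : PresentedGroup.mk GRels X = x := rfl
lemma mkY : PresentedGroup.mk GRels Y = y := rfl
lemma mkW : PresentedGroup.mk GRels W = w := rfl
lemma mkA : PresentedGroup.mk GRels A = a := rfl
lemma mkB : PresentedGroup.mk GRels B = b := rfl

lemma w2 : w * w = 1 := by
  have h := rel_of_mem (show W*W ∈ GRels by unfold GRels; repeat first | exact Set.mem_insert _ _ | exact Set.mem_singleton _ | apply Set.mem_insert_of_mem)
  simp only [mk_mul, mkW] at h
  exact h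

lemma a2 : a * a = 1 := by
  have h := rel_of_mem (show A*A ∈ GRels by unfold GRels; repeat first | exact Set.mem_insert _ _ | exact Set.mem_singleton _ | apply Set.mem_insert_of_mem)
  simp only [mk_mul, mkA] at h
  exact h

lemma b2 : b * b = 1 := by
  have h := rel_of_mem (show B*B ∈ GRels by unfold GRels; repeat first | exact Set.mem_insert _ _ | exact Set.mem_singleton _ | apply Set.mem_insert_of_mem)
  simp only [mk_mul, mkB] at h
  exact h

lemma winv : w⁻¹ = w := inv_eq_of_mul_eq_one_right w2
lemma ainv : a⁻¹ = a := inv_eq_of_mul_eq_one_right a2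
lemma binv : b⁻¹ = b := inv_eq_of_mul_eq_one_right b2

lemma w2' (t : G) : w * (w * t) = t := by rw [← mul_assoc, w2, one_mul]
lemma a2' (t : G) : a * (a * t) = t := by rw [← mul_assoc, a2, one_mul]
lemma b2' (t : G) : b * (b * t) = t := by rw [← mul_assoc, b2, one_mul]

-- conjugation forms of relators
lemma cj_xw : x * w * x⁻¹ = w := by
  have h := rel_of_mem (show X*W*X⁻¹*W⁻¹ ∈ GRels by unfold GRels; repeat first | exact Set.mem_insert _ _ | exact Set.mem_singleton _ | apply Set.mem_insert_of_mem)
  simp only [mk_mul, mk_inv, mkX, mkW] at h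
  exact mul_inv_eq_one.mp h

lemma cj_yw : y * w * y⁻¹ = w := by
  have h := rel_of_mem (show Y*W*Y⁻¹*W⁻¹ ∈ GRels by unfold GRels; repeat first | exact Set.mem_insert _ _ | exact Set.mem_singleton _ | apply Set.mem_insert_of_mem)
  simp only [mk_mul, mk_inv, mkY, mkW] at h
  exact mul_inv_eq_one.mp h

lemma cj_ab : a * b * a⁻¹ = b := by
  have h := rel_of_mem (show A*B*A⁻¹*B⁻¹ ∈ GRels by unfold GRels; repeat first | exact Set.mem_insert _ _ | exact Set.mem_singleton _ | apply Set.mem_insert_of_mem)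
  simp only [mk_mul, mk_inv, mkA, mkB] at h
  exact mul_inv_eq_one.mp h

lemma cj_ax : a * x * a⁻¹ = x := by
  have h := rel_of_mem (show A*X*A⁻¹*X⁻¹ ∈ GRels by unfold GRels; repeat first | exact Set.mem_insert _ _ | exact Set.mem_singleton _ | apply Set.mem_insert_of_mem)
  simp only [mk_mul, mk_inv, mkA, mkX] at h
  exact mul_inv_eq_one.mp h

lemma cj_ay : a * y * a⁻¹ = y * w := by
  have h := rel_of_mem (show A*Y*A⁻¹*(Y*W)⁻¹ ∈ GRels by unfold GRels; repeat first | exact Set.mem_insert _ _ | exact Set.mem_singleton _ | apply Set.mem_insert_of_mem)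
  simp only [mk_mul, mk_inv, mkA, mkY, mkW] at h
  exact mul_inv_eq_one.mp h

lemma cj_aw : a * w * a⁻¹ = w := by
  have h := rel_of_mem (show A*W*A⁻¹*W⁻¹ ∈ GRels by unfold GRels; repeat first | exact Set.mem_insert _ _ | exact Set.mem_singleton _ | apply Set.mem_insert_of_mem)
  simp only [mk_mul, mk_inv, mkA, mkW] at h
  exact mul_inv_eq_one.mp h

lemma cj_bx : b * x * b⁻¹ = x * w := by
  have h := rel_of_mem (show B*X*B⁻¹*(X*W)⁻¹ ∈ GRels by unfold GRels; repeat first | exact Set.mem_insert _ _ | exact Set.mem_singleton _ | apply Set.mem_insert_of_mem)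
  simp only [mk_mul, mk_inv, mkB, mkX, mkW] at h
  exact mul_inv_eq_one.mp h

lemma cj_by : b * y * b⁻¹ = y := by
  have h := rel_of_mem (show B*Y*B⁻¹*Y⁻¹ ∈ GRels by unfold GRels; repeat first | exact Set.mem_insert _ _ | exact Set.mem_singleton _ | apply Set.mem_insert_of_mem)
  simp only [mk_mul, mk_inv, mkB, mkY] at h
  exact mul_inv_eq_one.mp h

lemma cj_bw : b * w * b⁻¹ = w := by
  have h := rel_of_mem (show B*W*B⁻¹*W⁻¹ ∈ GRels by unfold GRels; repeat first | exact Set.mem_insert _ _ | exact Set.mem_singleton _ | apply Set.mem_insert_of_mem)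
  simp only [mk_mul, mk_inv, mkB, mkW] at h
  exact mul_inv_eq_one.mp h

lemma cj_gx : g * x * g⁻¹ = y⁻¹ := by
  have h := rel_of_mem (show Gg*X*Gg⁻¹*(Y⁻¹)⁻¹ ∈ GRels by unfold GRels; repeat first | exact Set.mem_insert _ _ | exact Set.mem_singleton _ | apply Set.mem_insert_of_mem)
  simp only [mk_mul, mk_inv, mkG, mkX, mkY] at h
  exact mul_inv_eq_one.mp h

lemma cj_gy : g * y * g⁻¹ = y * x * b := by
  have h := rel_of_mem (show Gg*Y*Gg⁻¹*(Y*X*B)⁻¹ ∈ GRels by unfold GRels; repeat first | exact Set.mem_insert _ _ | exact Set.mem_singleton _ | apply Set.mem_insert_of_mem)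
  simp only [mk_mul, mk_inv, mkG, mkY, mkX, mkB] at h
  exact mul_inv_eq_one.mp h

lemma cj_gw : g * w * g⁻¹ = w := by
  have h := rel_of_mem (show Gg*W*Gg⁻¹*W⁻¹ ∈ GRels by unfold GRels; repeat first | exact Set.mem_insert _ _ | exact Set.mem_singleton _ | apply Set.mem_insert_of_mem)
  simp only [mk_mul, mk_inv, mkG, mkW] at h
  exact mul_inv_eq_one.mp h

lemma cj_ga : g * a * g⁻¹ = b := by
  have h := rel_of_mem (show Gg*A*Gg⁻¹*B⁻¹ ∈ GRels by unfold GRels; repeat first | exact Set.mem_insert _ _ | exact Set.mem_singleton _ | apply Set.mem_insert_of_mem)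
  simp only [mk_mul, mk_inv, mkG, mkA, mkB] at h
  exact mul_inv_eq_one.mp h

lemma cj_gb : g * b * g⁻¹ = a * b := by
  have h := rel_of_mem (show Gg*B*Gg⁻¹*(A*B)⁻¹ ∈ GRels by unfold GRels; repeat first | exact Set.mem_insert _ _ | exact Set.mem_singleton _ | apply Set.mem_insert_of_mem)
  simp only [mk_mul, mk_inv, mkG, mkA, mkB] at h
  exact mul_inv_eq_one.mp h

-- sorted rewrite rules
lemma wx : w * x = x * w := (mul_inv_eq_iff_eq_mul.mp cj_xw).symm
lemma wy : w * y = y * w := (mul_inv_eq_iff_eq_mul.mp cj_yw).symm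
lemma ba : b * a = a * b := (mul_inv_eq_iff_eq_mul.mp cj_ab).symm
lemma ax : a * x = x * a := mul_inv_eq_iff_eq_mul.mp cj_ax
lemma aw : a * w = w * a := mul_inv_eq_iff_eq_mul.mp cj_aw
lemma bw : b * w = w * b := mul_inv_eq_iff_eq_mul.mp cj_bw
lemma bby : b * y = y * b := mul_inv_eq_iff_eq_mul.mp cj_by
lemma ay : a * y = y * (w * a) := by
  rw [mul_inv_eq_iff_eq_mul.mp cj_ay, mul_assoc]
lemma bx : b * x = x * (w * b) := by
  rw [mul_inv_eq_iff_eq_mul.mp cj_bx, mul_assoc]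
lemma gx : g * x = y⁻¹ * g := mul_inv_eq_iff_eq_mul.mp cj_gx
lemma gw : g * w = w * g := mul_inv_eq_iff_eq_mul.mp cj_gw
lemma ga : g * a = b * g := mul_inv_eq_iff_eq_mul.mp cj_ga
lemma gb : g * b = a * (b * g) := by
  rw [mul_inv_eq_iff_eq_mul.mp cj_gb, mul_assoc]
lemma gy : g * y = y * (x * (b * g)) := by
  rw [mul_inv_eq_iff_eq_mul.mp cj_gy, mul_assoc, mul_assoc]

lemma wxi : w * x⁻¹ = x⁻¹ * w := (Commute.inv_right (show Commute w x from wx)).eq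
lemma wyi : w * y⁻¹ = y⁻¹ * w := (Commute.inv_right (show Commute w y from wy)).eq
lemma axi : a * x⁻¹ = x⁻¹ * a := (Commute.inv_right (show Commute a x from ax)).eq
lemma byi : b * y⁻¹ = y⁻¹ * b := (Commute.inv_right (show Commute b y from bby)).eq

-- t-forms
lemma wx' (t : G) : w * (x * t) = x * (w * t) := by rw [← mul_assoc, wx, mul_assoc]
lemma wy' (t : G) : w * (y * t) = y * (w * t) := by rw [← mul_assoc, wy, mul_assoc]
lemma wxi' (t : G) : w * (x⁻¹ * t) = x⁻¹ * (w * t) := by rw [← mul_assoc, wxi, mul_assoc]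
lemma wyi' (t : G) : w * (y⁻¹ * t) = y⁻¹ * (w * t) := by rw [← mul_assoc, wyi, mul_assoc]
lemma ba' (t : G) : b * (a * t) = a * (b * t) := by rw [← mul_assoc, ba, mul_assoc]
lemma ax' (t : G) : a * (x * t) = x * (a * t) := by rw [← mul_assoc, ax, mul_assoc]
lemma axi' (t : G) : a * (x⁻¹ * t) = x⁻¹ * (a * t) := by rw [← mul_assoc, axi, mul_assoc]
lemma aw' (t : G) : a * (w * t) = w * (a * t) := by rw [← mul_assoc, aw, mul_assoc]
lemma bw' (t : G) : b * (w * t) = w * (b * t) := by rw [← mul_assoc, bw, mul_assoc]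
lemma bby' (t : G) : b * (y * t) = y * (b * t) := by rw [← mul_assoc, bby, mul_assoc]
lemma byi' (t : G) : b * (y⁻¹ * t) = y⁻¹ * (b * t) := by rw [← mul_assoc, byi, mul_assoc]
lemma ay' (t : G) : a * (y * t) = y * (w * (a * t)) := by
  rw [← mul_assoc, ay, mul_assoc, mul_assoc]
lemma bx' (t : G) : b * (x * t) = x * (w * (b * t)) := by
  rw [← mul_assoc, bx, mul_assoc, mul_assoc]
lemma gx' (t : G) : g * (x * t) = y⁻¹ * (g * t) := by rw [← mul_assoc, gx, mul_assoc]
lemma gw' (t : G) : g * (w * t) = w * (g * t) := by rw [← mul_assoc, gw, mul_assoc]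
lemma ga' (t : G) : g * (a * t) = b * (g * t) := by rw [← mul_assoc, ga, mul_assoc]
lemma gb' (t : G) : g * (b * t) = a * (b * (g * t)) := by
  rw [← mul_assoc, gb, mul_assoc, mul_assoc]
lemma gy' (t : G) : g * (y * t) = y * (x * (b * (g * t))) := by
  rw [← mul_assoc, gy, mul_assoc, mul_assoc, mul_assoc]

-- twisted inverse rules
lemma ayi : a * y⁻¹ = y⁻¹ * (w * a) := by
  have h2 : a * y⁻¹ * a⁻¹ = (y * w)⁻¹ := by rw [← cj_ay]; group
  have h3 : a * y⁻¹ = (y * w)⁻¹ * a := mul_inv_eq_iff_eq_mul.mp h2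
  rw [h3, mul_inv_rev, winv, mul_assoc, wyi']
lemma bxi : b * x⁻¹ = x⁻¹ * (w * b) := by
  have h2 : b * x⁻¹ * b⁻¹ = (x * w)⁻¹ := by rw [← cj_bx]; group
  have h3 : b * x⁻¹ = (x * w)⁻¹ * b := mul_inv_eq_iff_eq_mul.mp h2
  rw [h3, mul_inv_rev, winv, mul_assoc, wxi']
lemma gxi : g * x⁻¹ = y * g := by
  have h2 : g * x⁻¹ * g⁻¹ = (y⁻¹)⁻¹ := by rw [← cj_gx]; group
  have h3 := mul_inv_eq_iff_eq_mul.mp h2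
  rwa [inv_inv] at h3
lemma ayi' (t : G) : a * (y⁻¹ * t) = y⁻¹ * (w * (a * t)) := by
  rw [← mul_assoc, ayi, mul_assoc, mul_assoc]
lemma bxi' (t : G) : b * (x⁻¹ * t) = x⁻¹ * (w * (b * t)) := by
  rw [← mul_assoc, bxi, mul_assoc, mul_assoc]
lemma gxi' (t : G) : g * (x⁻¹ * t) = y * (g * t) := by rw [← mul_assoc, gxi, mul_assoc]
lemma gyi : g * y⁻¹ = x⁻¹ * (y⁻¹ * (w * (b * g))) := by
  have h2 : g * y⁻¹ * g⁻¹ = (y * x * b)⁻¹ := by rw [← cj_gy]; group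
  have h3 : g * y⁻¹ = (y * x * b)⁻¹ * g := mul_inv_eq_iff_eq_mul.mp h2
  rw [h3, mul_inv_rev, mul_inv_rev, binv, mul_assoc, mul_assoc, bxi', byi', wyi']
lemma gyi' (t : G) : g * (y⁻¹ * t) = x⁻¹ * (y⁻¹ * (w * (b * (g * t)))) := by
  rw [← mul_assoc, gyi, mul_assoc, mul_assoc, mul_assoc, mul_assoc]

def fφ : Fin 6 → G
  | 0 => g | 1 => y⁻¹ * a | 2 => y * x * w | 3 => w | 4 => b | 5 => a * b

def fψ : Fin 6 → G
  | 0 => g | 1 => x * a * b * y * w | 2 => b * a * x⁻¹ | 3 => w | 4 => b * a | 5 => a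

lemma hφ : ∀ r ∈ GRels, FreeGroup.lift fφ r = 1 := by
  intro r hr
  simp only [GRels, Set.mem_insert_iff, Set.mem_singleton_iff] at hr
  rcases hr with rfl|rfl|rfl|rfl|rfl|rfl|rfl|rfl|rfl|rfl|rfl|rfl|rfl|rfl|rfl|rfl|rfl <;>
  simp [Gg, X, Y, W, A, B, fφ, mul_assoc, winv, ainv, binv, w2, w2', a2, a2', b2, b2',
    wx, wx', wxi, wxi', wy, wy', wyi, wyi', ba, ba', ax, ax', axi, axi', aw, aw',
    ay, ay', ayi, ayi', bw, bw', bby, bby', byi, byi', bx, bx', bxi, bxi',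
    gx, gx', gxi, gxi', gy, gy', gyi, gyi', gw, gw', ga, ga', gb, gb']

lemma hψ : ∀ r ∈ GRels, FreeGroup.lift fψ r = 1 := by
  intro r hr
  simp only [GRels, Set.mem_insert_iff, Set.mem_singleton_iff] at hr
  rcases hr with rfl|rfl|rfl|rfl|rfl|rfl|rfl|rfl|rfl|rfl|rfl|rfl|rfl|rfl|rfl|rfl|rfl <;>
  simp [Gg, X, Y, W, A, B, fψ, mul_assoc, winv, ainv, binv, w2, w2', a2, a2', b2, b2',
    wx, wx', wxi, wxi', wy, wy', wyi, wyi', ba, ba', ax, ax', axi, axi', aw, aw',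
    ay, ay', ayi, ayi', bw, bw', bby, bby', byi, byi', bx, bx', bxi, bxi',
    gx, gx', gxi, gxi', gy, gy', gyi, gyi', gw, gw', ga, ga', gb, gb']

lemma of0 : (PresentedGroup.of 0 : G) = g := rfl
lemma of1 : (PresentedGroup.of 1 : G) = x := rfl
lemma of2 : (PresentedGroup.of 2 : G) = y := rfl
lemma of3 : (PresentedGroup.of 3 : G) = w := rfl
lemma of4 : (PresentedGroup.of 4 : G) = a := rfl
lemma of5 : (PresentedGroup.of 5 : G) = b := rfl


attribute [simp] winv ainv binv w2 w2' a2 a2' b2 b2' wx wx' wxi wxi' wy wy' wyi wyi'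
  ba ba' ax ax' axi axi' aw aw' ay ay' ayi ayi' bw bw' bby bby' byi byi' bx bx' bxi bxi'
  gx gx' gxi gxi' gy gy' gyi gyi' gw gw' ga ga' gb gb'

lemma phi_g : PresentedGroup.toGroup hφ g = g := PresentedGroup.toGroup.of hφ
lemma phi_x : PresentedGroup.toGroup hφ x = y⁻¹ * a := PresentedGroup.toGroup.of hφ
lemma phi_y : PresentedGroup.toGroup hφ y = y * x * w := PresentedGroup.toGroup.of hφ
lemma phi_w : PresentedGroup.toGroup hφ w = w := PresentedGroup.toGroup.of hφ
lemma phi_a : PresentedGroup.toGroup hφ a = b := PresentedGroup.toGroup.of hφ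
lemma phi_b : PresentedGroup.toGroup hφ b = a * b := PresentedGroup.toGroup.of hφ
lemma psi_g : PresentedGroup.toGroup hψ g = g := PresentedGroup.toGroup.of hψ
lemma psi_x : PresentedGroup.toGroup hψ x = x * a * b * y * w := PresentedGroup.toGroup.of hψ
lemma psi_y : PresentedGroup.toGroup hψ y = b * a * x⁻¹ := PresentedGroup.toGroup.of hψ
lemma psi_w : PresentedGroup.toGroup hψ w = w := PresentedGroup.toGroup.of hψ
lemma psi_a : PresentedGroup.toGroup hψ a = b * a := PresentedGroup.toGroup.of hψ
lemma psi_b : PresentedGroup.toGroup hψ b = a := PresentedGroup.toGroup.of hψ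

attribute [simp] phi_g phi_x phi_y phi_w phi_a phi_b psi_g psi_x psi_y psi_w psi_a psi_b

/-- The assignment `g ↦ g`, `x ↦ y⁻¹·a`, `y ↦ y·x·w`, `a ↦ b`, `b ↦ a·b`, `w ↦ w`
extends to a group automorphism of `G`. -/
theorem exists_automorphism :
    ∃ φ : G ≃* G,
      φ g = g ∧ φ x = y⁻¹ * a ∧ φ y = y * x * w ∧ φ a = b ∧ φ b = a * b ∧ φ w = w := by
  have key1 : (PresentedGroup.toGroup hψ).comp (PresentedGroup.toGroup hφ) = MonoidHom.id G := by
    apply PresentedGroup.ext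
    intro i
    fin_cases i
    · show PresentedGroup.toGroup hψ (PresentedGroup.toGroup hφ g) = g
      simp [mul_assoc]
    · show PresentedGroup.toGroup hψ (PresentedGroup.toGroup hφ x) = x
      simp [mul_assoc]
    · show PresentedGroup.toGroup hψ (PresentedGroup.toGroup hφ y) = y
      simp [mul_assoc]
    · show PresentedGroup.toGroup hψ (PresentedGroup.toGroup hφ w) = w
      simp [mul_assoc]
    · show PresentedGroup.toGroup hψ (PresentedGroup.toGroup hφ a) = a
      simp [mul_assoc]
    · show PresentedGroup.toGroup hψ (PresentedGroup.toGroup hφ b) = b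
      simp [mul_assoc]
  have key2 : (PresentedGroup.toGroup hφ).comp (PresentedGroup.toGroup hψ) = MonoidHom.id G := by
    apply PresentedGroup.ext
    intro i
    fin_cases i
    · show PresentedGroup.toGroup hφ (PresentedGroup.toGroup hψ g) = g
      simp [mul_assoc]
    · show PresentedGroup.toGroup hφ (PresentedGroup.toGroup hψ x) = x
      simp [mul_assoc]
    · show PresentedGroup.toGroup hφ (PresentedGroup.toGroup hψ y) = y
      simp [mul_assoc]
    · show PresentedGroup.toGroup hφ (PresentedGroup.toGroup hψ w) = w
      simp [mul_assoc]
    · show PresentedGroup.toGroup hφ (PresentedGroup.toGroup hψ a) = a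
      simp [mul_assoc]
    · show PresentedGroup.toGroup hφ (PresentedGroup.toGroup hψ b) = b
      simp [mul_assoc]
  exact ⟨MonoidHom.toMulEquiv (PresentedGroup.toGroup hφ) (PresentedGroup.toGroup hψ) key1 key2,
    phi_g, phi_x, phi_y, phi_a, phi_b, phi_w⟩

end EyralOkaG
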